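/- Let (x_n)_{n∈I} be a frame with canonical dual (y_n). If E = {1} satisfies the MRC for (x_n), then ⟨y_1, x_1⟩ ≠ 1; conversely, if ⟨y_1, x_1⟩ = 1, then x_1 is not in the closed span of {x_n : n ≥ 2}. -/

import Mathlib

noncomputable section

variable {H : Type*} [NormedAddCommGroup H] [InnerProductSpace ℂ H] [CompleteSpace H]

/-- `(x n)_{n ∈ I}` is a frame for `H` with frame bounds `A`, `B`. -/
def IsFrameOn (x : ℕ → H) (I : Set ℕ) (A B : ℝ) : Prop :=
  0 < A ∧ 0 < B ∧ ∀ h : H,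
    Summable (fun n : I => ‖(inner ℂ (x n) h : ℂ)‖ ^ 2) ∧
    A * ‖h‖ ^ 2 ≤ ∑' n : I, ‖(inner ℂ (x n) h : ℂ)‖ ^ 2 ∧
    ∑' n : I, ‖(inner ℂ (x n) h : ℂ)‖ ^ 2 ≤ B * ‖h‖ ^ 2

/-- `(y n)_{n ∈ I}` is the canonical dual of `(x n)_{n ∈ I}`. -/
def IsCanonicalDualOn (y x : ℕ → H) (I : Set ℕ) : Prop :=
  ∃ S Sinv : H →L[ℂ] H,
    (∀ h : H, HasSum (fun n : I => (inner ℂ (x n) h : ℂ) • x n) (S h)) ∧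
    Sinv.comp S = ContinuousLinearMap.id ℂ H ∧
    S.comp Sinv = ContinuousLinearMap.id ℂ H ∧
    ∀ n ∈ I, y n = Sinv (x n)

/-- If `E = {1}` satisfies the MRC for the frame `(x n)_{n ∈ I}` with canonical dual
`(y n)`, then `⟨y 1, x 1⟩ ≠ 1`; conversely, if `⟨y 1, x 1⟩ = 1`, then `x 1` does not lie
in the closed span of `{x n : n ∈ I, n ≥ 2}`. -/
theorem stmt8 (x y : ℕ → H) (I : Set ℕ) (A B : ℝ) (hx : IsFrameOn x I A B)
    (hy : IsCanonicalDualOn y x I) (h1 : (1 : ℕ) ∈ I) :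
    (Dense ((Submodule.span ℂ (x '' (I \ {1})) : Submodule ℂ H) : Set H) →
      (inner ℂ (x 1) (y 1) : ℂ) ≠ 1) ∧
    ((inner ℂ (x 1) (y 1) : ℂ) = 1 →
      x 1 ∉ closure ((Submodule.span ℂ (x '' (I \ {1})) : Submodule ℂ H) : Set H)) := by
  obtain ⟨S, Sinv, hS, hSinvS, hSSinv, hyx⟩ := hy
  have hy1 : y 1 = Sinv (x 1) := hyx 1 h1
  have hSy1 : S (y 1) = x 1 := by
    have := congrArg (fun T : H →L[ℂ] H => T (x 1)) hSSinv
    simpa [hy1] using this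
  have key : (inner ℂ (x 1) (y 1) : ℂ) = 1 →
      x 1 ∉ closure ((Submodule.span ℂ (x '' (I \ {1})) : Submodule ℂ H) : Set H) := by
    intro hone
    have hone' : (inner ℂ (y 1) (x 1) : ℂ) = 1 := by
      rw [← inner_conj_symm, hone]; simp
    have hsum := hS (y 1)
    rw [hSy1] at hsum
    have hsum2 : HasSum (fun n : I => (inner ℂ (y 1) ((inner ℂ (x n) (y 1) : ℂ) • x n) : ℂ))
        (inner ℂ (y 1) (x 1)) := (innerSL ℂ (y 1)).hasSum hsum
    have hterm : ∀ n : I, (inner ℂ (y 1) ((inner ℂ (x n) (y 1) : ℂ) • x n) : ℂ)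
        = ((‖(inner ℂ (x (n : ℕ)) (y 1) : ℂ)‖ ^ 2 : ℝ) : ℂ) := by
      intro n
      rw [inner_smul_right, ← inner_conj_symm (x (n : ℕ)) (y 1),
        ← Complex.normSq_eq_conj_mul_self]
      rw [Complex.normSq_eq_norm_sq, RCLike.norm_conj]
    have hsum3 : HasSum (fun n : I => ((‖(inner ℂ (x (n : ℕ)) (y 1) : ℂ)‖ ^ 2 : ℝ) : ℂ)) (1 : ℂ) := by
      rw [← hone']
      exact hsum2.congr_fun fun n => (hterm n).symm
    have hsumR : HasSum (fun n : I => ‖(inner ℂ (x (n : ℕ)) (y 1) : ℂ)‖ ^ 2) (1 : ℝ) := by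
      rw [show (1 : ℂ) = ((1 : ℝ) : ℂ) by norm_num] at hsum3
      exact Complex.hasSum_ofReal.mp hsum3
    set n0 : I := ⟨1, h1⟩
    have hf0 : ‖(inner ℂ (x (n0 : ℕ)) (y 1) : ℂ)‖ ^ 2 = 1 := by
      simp [n0, hone]
    have hzero : ∀ j : I, j ≠ n0 → (inner ℂ (x (j : ℕ)) (y 1) : ℂ) = 0 := by
      intro j hj
      have hle := sum_le_hasSum ({n0, j} : Finset I)
        (fun i _ => sq_nonneg _) hsumR
      rw [Finset.sum_pair (Ne.symm hj)] at hle
      rw [hf0] at hle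
      have h0 : ‖(inner ℂ (x (j : ℕ)) (y 1) : ℂ)‖ ^ 2 ≤ 0 := by linarith
      have := le_antisymm h0 (sq_nonneg _)
      have hn : ‖(inner ℂ (x (j : ℕ)) (y 1) : ℂ)‖ = 0 := by
        nlinarith [norm_nonneg (inner ℂ (x (j : ℕ)) (y 1) : ℂ)]
      exact norm_eq_zero.mp hn
    -- orthogonality of y 1 to the span
    have horth : ∀ v ∈ (Submodule.span ℂ (x '' (I \ {1})) : Submodule ℂ H),
        (inner ℂ (y 1) v : ℂ) = 0 := by
      intro v hv
      induction hv using Submodule.span_induction with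
      | mem u hu =>
        obtain ⟨n, hn, rfl⟩ := hu
        have hnI : n ∈ I := hn.1
        have hn1 : n ≠ 1 := hn.2
        have : (inner ℂ (x n) (y 1) : ℂ) = 0 := by
          refine hzero ⟨n, hnI⟩ ?_
          simp [n0, Subtype.ext_iff, hn1]
        rw [← inner_conj_symm, this]; simp
      | zero => simp
      | add u w _ _ hu hw => rw [inner_add_right, hu, hw]; simp
      | smul c u _ hu => rw [inner_smul_right, hu]; simp
    intro hmem
    have hclosed : IsClosed {v : H | (inner ℂ (y 1) v : ℂ) = 0} := by
      have : {v : H | (inner ℂ (y 1) v : ℂ) = 0} = (innerSL ℂ (y 1)) ⁻¹' {0} := rfl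
      rw [this]
      exact isClosed_singleton.preimage (innerSL ℂ (y 1)).continuous
    have : (inner ℂ (y 1) (x 1) : ℂ) = 0 := by
      have hsub : closure ((Submodule.span ℂ (x '' (I \ {1})) : Submodule ℂ H) : Set H)
          ⊆ {v : H | (inner ℂ (y 1) v : ℂ) = 0} :=
        closure_minimal (fun v hv => horth v hv) hclosed
      exact hsub hmem
    rw [hone'] at this
    exact one_ne_zero this
  constructor
  · intro hdense hone
    have := key hone
    rw [hdense.closure_eq] at this
    exact this (Set.mem_univ _)
  · exact key

end
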